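/- Let I be a set, F a filter on I, and κ an uncountable cardinal. Then the following are equivalent: (1) for every partition of I into fewer than κ subsets J_s (s ∈ S), there exist finitely many indices s_0, …, s_{n-1} ∈ S such that J_{s_0} ∪ … ∪ J_{s_{n-1}} ∈ F; (2) F is the intersection of finitely many κ-complete ultrafilters on I. -/

import Mathlib

universe u

open Function

def KappaComplete {I : Type u} (κ : Cardinal.{u}) (F : Filter I) : Prop :=
  ∀ 𝒮 : Set (Set I), Cardinal.mk 𝒮 < κ → (∀ s ∈ 𝒮, s ∈ F) → ⋂₀ 𝒮 ∈ F

section Aux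

variable {I : Type u} {F : Filter I} {κ : Cardinal.{u}}

/-- The partition property. -/
def PartProp (F : Filter I) (κ : Cardinal.{u}) : Prop :=
  ∀ (S : Type u) (J : S → Set I), Cardinal.mk S < κ →
      Pairwise (Disjoint on J) → (⋃ s, J s) = Set.univ →
      ∃ t : Finset S, (⋃ s ∈ t, J s) ∈ F

lemma aux_complete (hκ : Cardinal.aleph0 < κ) (H : PartProp F κ) : KappaComplete κ F := by
  classical
  intro 𝒮 hcard hmem
  let r : ↥𝒮 → ↥𝒮 → Prop := WellOrderingRel
  have hwo : IsWellOrder ↥𝒮 r := WellOrderingRel.isWellOrder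
  let J : Option ↥𝒮 → Set I := fun o =>
    match o with
    | none => ⋂₀ 𝒮
    | some s => {x | x ∉ (s : Set I) ∧ ∀ s' : ↥𝒮, r s' s → x ∈ (s' : Set I)}
  have hcard' : Cardinal.mk (Option ↥𝒮) < κ := by
    rw [Cardinal.mk_option]
    exact Cardinal.add_lt_of_lt hκ.le hcard (Cardinal.one_lt_aleph0.trans hκ)
  have hdisj : Pairwise (Disjoint on J) := by
    intro i j hij
    have key : ∀ s s' : ↥𝒮, r s s' → Disjoint (J (some s)) (J (some s')) := by
      intro s s' hr
      apply Set.disjoint_left.2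
      intro x hx hx'
      exact hx.1 (hx'.2 s hr)
    have keyn : ∀ s : ↥𝒮, Disjoint (J none) (J (some s)) := by
      intro s
      apply Set.disjoint_left.2
      intro x hx hx'
      exact hx'.1 (hx (s : Set I) s.2)
    match i, j with
    | none, none => exact absurd rfl hij
    | none, some s => exact keyn s
    | some s, none => exact (keyn s).symm
    | some s, some s' =>
      have hne : s ≠ s' := fun h => hij (by rw [h])
      rcases trichotomous_of r s s' with h | h | h
      · exact key s s' h
      · exact absurd h hne
      · exact (key s' s h).symm
  have hcover : (⋃ o, J o) = Set.univ := by
    apply Set.eq_univ_of_forall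
    intro x
    by_cases hx : x ∈ ⋂₀ 𝒮
    · exact Set.mem_iUnion.2 ⟨none, hx⟩
    · have hT : {s : ↥𝒮 | x ∉ (s : Set I)}.Nonempty := by
        rw [Set.mem_sInter] at hx
        push_neg at hx
        obtain ⟨s, hs, hxs⟩ := hx
        exact ⟨⟨s, hs⟩, hxs⟩
      have hwf : WellFounded r := hwo.toIsWellFounded.wf
      refine Set.mem_iUnion.2 ⟨some (hwf.min _ hT), hwf.min_mem _ hT, ?_⟩
      intro s' hs'
      by_contra hxs'
      exact hwf.not_lt_min _ hxs' hs'
  obtain ⟨t, ht⟩ := H _ J hcard' hdisj hcover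
  have hB : (⋂ s ∈ t.eraseNone, (s : Set I)) ∈ F :=
    (Filter.biInter_finset_mem _).2 fun s _ => hmem s s.2
  refine F.mem_of_superset (Filter.inter_mem ht hB) ?_
  rintro x ⟨hx1, hx2⟩
  simp only [Set.mem_iUnion, exists_prop] at hx1
  obtain ⟨o, hot, hxo⟩ := hx1
  match o with
  | none => exact hxo
  | some s =>
      exfalso
      apply hxo.1
      have hst : s ∈ t.eraseNone := Finset.mem_eraseNone.2 hot
      have := Set.mem_iInter₂.1 hx2 s hst
      exact this

lemma aux_nat (hκ : Cardinal.aleph0 < κ) (H : PartProp F κ) (A : ℕ → Set I)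
    (hpos : ∀ n, (A n)ᶜ ∉ F) (hdisj : Pairwise (Disjoint on A)) : False := by
  classical
  let J : Option (ULift.{u} ℕ) → Set I := fun o =>
    match o with
    | none => (⋃ n, A n)ᶜ
    | some n => A n.down
  have hcard : Cardinal.mk (Option (ULift.{u} ℕ)) < κ := by
    rw [Cardinal.mk_option]
    exact Cardinal.add_lt_of_lt hκ.le
      (by rw [Cardinal.mk_eq_aleph0 (ULift.{u} ℕ)]; exact hκ)
      (Cardinal.one_lt_aleph0.trans hκ)
  have hd : Pairwise (Disjoint on J) := by
    intro i j hij
    have keyn : ∀ n : ULift.{u} ℕ, Disjoint (J none) (J (some n)) := by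
      intro n
      apply Set.disjoint_left.2
      intro x hx hx'
      exact hx (Set.mem_iUnion.2 ⟨n.down, hx'⟩)
    match i, j with
    | none, none => exact absurd rfl hij
    | none, some n => exact keyn n
    | some n, none => exact (keyn n).symm
    | some n, some m =>
      have : n.down ≠ m.down := by
        intro h; exact hij (by cases n; cases m; simp_all)
      exact hdisj this
  have hcover : (⋃ o, J o) = Set.univ := by
    apply Set.eq_univ_of_forall
    intro x
    by_cases hx : x ∈ ⋃ n, A n
    · obtain ⟨n, hn⟩ := Set.mem_iUnion.1 hx
      exact Set.mem_iUnion.2 ⟨some (ULift.up n), hn⟩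
    · exact Set.mem_iUnion.2 ⟨none, hx⟩
  obtain ⟨t, ht⟩ := H _ J hcard hd hcover
  obtain ⟨n, hn⟩ := Infinite.exists_notMem_finset (t.eraseNone.image ULift.down)
  apply hpos n
  apply F.mem_of_superset ht
  intro x hx
  simp only [Set.mem_iUnion, exists_prop] at hx
  obtain ⟨o, hot, hxo⟩ := hx
  match o with
  | none => exact fun hxn => hxo (Set.mem_iUnion.2 ⟨n, hxn⟩)
  | some m =>
      have hmn : m.down ≠ n := by
        intro h
        apply hn
        refine Finset.mem_image.2 ⟨m, Finset.mem_eraseNone.2 hot, h⟩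
      exact Set.disjoint_left.1 (hdisj hmn) hxo

/-- `X` is an atom for `F`. -/
def IsAtomF (F : Filter I) (X : Set I) : Prop :=
  Xᶜ ∉ F ∧ ∀ s : Set I, (X ∩ s)ᶜ ∉ F → (X ∩ sᶜ)ᶜ ∈ F

lemma atom_exists (hκ : Cardinal.aleph0 < κ) (H : PartProp F κ)
    {X₀ : Set I} (hpos : X₀ᶜ ∉ F) : ∃ Y, Y ⊆ X₀ ∧ IsAtomF F Y := by
  classical
  by_contra h
  push_neg at h
  have key : ∀ Y : Set I, Yᶜ ∉ F → Y ⊆ X₀ → ∃ s, (Y ∩ s)ᶜ ∉ F ∧ (Y ∩ sᶜ)ᶜ ∉ F := by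
    intro Y hY hY2
    have h2 := h Y hY2
    rw [IsAtomF] at h2
    push_neg at h2
    exact h2 hY
  let P := {Y : Set I // Yᶜ ∉ F ∧ Y ⊆ X₀}
  have key' : ∀ Y : P, ∃ s, ((Y : Set I) ∩ s)ᶜ ∉ F ∧ ((Y : Set I) ∩ sᶜ)ᶜ ∉ F :=
    fun Y => key Y.1 Y.2.1 Y.2.2
  choose s hs1 hs2 using key'
  let g : ℕ → P := fun n => Nat.rec ⟨X₀, hpos, subset_rfl⟩
    (fun _ Y => ⟨Y.1 ∩ (s Y)ᶜ, hs2 Y, Set.inter_subset_left.trans Y.2.2⟩) n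
  have hgsucc : ∀ n, (g (n + 1)).1 = (g n).1 ∩ (s (g n))ᶜ := fun n => rfl
  have hmono : ∀ n m, n ≤ m → (g m).1 ⊆ (g n).1 := by
    intro n m hle
    induction hle with
    | refl => exact subset_rfl
    | step h ih =>
        refine subset_trans ?_ ih
        rw [hgsucc]
        exact Set.inter_subset_left
  let A : ℕ → Set I := fun n => (g n).1 ∩ s (g n)
  have hApos : ∀ n, (A n)ᶜ ∉ F := fun n => hs1 (g n)
  have hAdisj : Pairwise (Disjoint on A) := by
    have key2 : ∀ n m, n < m → Disjoint (A n) (A m) := by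
      intro n m hnm
      apply Set.disjoint_left.2
      intro x hxA hxA'
      have h1 : x ∈ (g (n + 1)).1 := hmono _ _ hnm hxA'.1
      rw [hgsucc] at h1
      exact h1.2 hxA.2
    intro n m hnm
    rcases lt_or_gt_of_ne hnm with hlt | hlt
    · exact key2 _ _ hlt
    · exact (key2 _ _ hlt).symm
  exact aux_nat hκ H A hApos hAdisj

lemma atom_ultra (hF : F.NeBot) {X : Set I} (hX : IsAtomF F X) :
    ∃ U : Ultrafilter I, (U : Filter I) = F ⊓ Filter.principal X := by
  have hne : Filter.NeBot (F ⊓ Filter.principal X) := by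
    rw [Filter.neBot_iff]
    intro h
    exact hX.1 (Filter.inf_principal_eq_bot.1 h)
  have himp : ∀ s : Set I, {x | x ∈ X → x ∈ s} = (X ∩ sᶜ)ᶜ := by
    intro s
    ext x
    simp only [Set.mem_setOf_eq, Set.mem_compl_iff, Set.mem_inter_iff, not_and, not_not]
  refine ⟨Ultrafilter.ofComplNotMemIff (F ⊓ Filter.principal X) ?_, rfl⟩
  intro t
  constructor
  · intro ht
    rw [Filter.mem_inf_principal, himp] at ht ⊢
    rw [compl_compl] at ht
    have : (X ∩ t)ᶜ ∉ F := by simpa using ht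
    simpa using hX.2 t this
  · intro ht htc
    exact (Filter.compl_notMem ht) htc

end Aux

theorem filter_finite_inter_kappa_complete_ultrafilters_iff {I : Type u}
    (F : Filter I) (κ : Cardinal.{u}) (hκ : Cardinal.aleph0 < κ) :
    (∀ (S : Type u) (J : S → Set I), Cardinal.mk S < κ →
        Pairwise (Disjoint on J) → (⋃ s, J s) = Set.univ →
        ∃ t : Finset S, (⋃ s ∈ t, J s) ∈ F)
  ↔ (∃ (n : ℕ) (U : Fin n → Ultrafilter I),
        (∀ m, KappaComplete κ (U m : Filter I)) ∧ F = ⨆ m, (U m : Filter I)) := by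
  classical
  constructor
  · intro H
    by_cases hbot : F = ⊥
    · refine ⟨0, Fin.elim0, fun m => m.elim0, ?_⟩
      rw [hbot]
      exact (iSup_of_empty _).symm
    · have hne : F.NeBot := ⟨hbot⟩
      have hFk : KappaComplete κ F := aux_complete hκ H
      set 𝒞 : Set (Set (Set I)) :=
        {𝒜 | 𝒜.PairwiseDisjoint id ∧ ∀ X ∈ 𝒜, IsAtomF F X} with h𝒞
      have hzorn : ∀ c ⊆ 𝒞, IsChain (· ⊆ ·) c → ∃ ub ∈ 𝒞, ∀ s ∈ c, s ⊆ ub := by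
        intro c hc hchain
        refine ⟨⋃₀ c, ⟨?_, ?_⟩, fun s hs => Set.subset_sUnion_of_mem hs⟩
        · intro X hX Y hY hXY
          obtain ⟨a, hac, hXa⟩ := hX
          obtain ⟨b, hbc, hYb⟩ := hY
          rcases hchain.total hac hbc with hab | hab
          · exact (hc hbc).1 (hab hXa) hYb hXY
          · exact (hc hac).1 hXa (hab hYb) hXY
        · rintro X ⟨a, hac, hXa⟩
          exact (hc hac).2 X hXa
      obtain ⟨𝒜, h𝒜max⟩ := zorn_subset 𝒞 hzorn
      have h𝒜C : 𝒜 ∈ 𝒞 := h𝒜max.1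
      -- 𝒜 is finite
      have hfin : 𝒜.Finite := by
        by_contra hinf
        have e := Set.Infinite.natEmbedding 𝒜 hinf
        refine aux_nat hκ H (fun n => (e n : Set I)) (fun n => (h𝒜C.2 _ (e n).2).1) ?_
        intro n m hnm
        have : (e n : Set I) ≠ (e m : Set I) := by
          intro h
          exact hnm (e.injective (Subtype.ext h))
        exact h𝒜C.1 (e n).2 (e m).2 this
      -- the union of 𝒜 is in F
      have hUnion : ⋃₀ 𝒜 ∈ F := by
        by_contra hU
        have hZ : ((⋃₀ 𝒜)ᶜ)ᶜ ∉ F := by rwa [compl_compl]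
        obtain ⟨Y, hY1, hY2⟩ := atom_exists hκ H hZ
        have hYne : Y ∉ 𝒜 := by
          intro hY𝒜
          apply hY2.1
          have : Y = ∅ := by
            apply Set.eq_empty_of_forall_notMem
            intro x hx
            exact hY1 hx (Set.mem_sUnion.2 ⟨Y, hY𝒜, hx⟩)
          rw [this]
          simpa using Filter.univ_mem
        have hins : insert Y 𝒜 ∈ 𝒞 := by
          constructor
          · apply h𝒜C.1.insert
            intro X hX _
            apply Set.disjoint_left.2
            intro x hxY hxX
            exact hY1 hxY (Set.mem_sUnion.2 ⟨X, hX, hxX⟩)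
          · intro X hX
            rcases hX with rfl | hX
            · exact hY2
            · exact h𝒜C.2 X hX
        exact hYne (h𝒜max.2 hins (Set.subset_insert _ _) (Set.mem_insert _ _))
      -- ultrafilters
      have hult : ∀ X : ↥𝒜, ∃ U : Ultrafilter I,
          (U : Filter I) = F ⊓ Filter.principal (X : Set I) :=
        fun X => atom_ultra hne (h𝒜C.2 _ X.2)
      choose V hV using hult
      have hGk : ∀ X : Set I, KappaComplete κ (F ⊓ Filter.principal X) := by
        intro X 𝒮 hc hm
        have h2 : ⋂₀ ((fun s => {x | x ∈ X → x ∈ s}) '' 𝒮) ∈ F := by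
          apply hFk _ (lt_of_le_of_lt Cardinal.mk_image_le hc)
          rintro _ ⟨s, hs, rfl⟩
          exact Filter.mem_inf_principal.1 (hm s hs)
        rw [Filter.mem_inf_principal]
        apply F.mem_of_superset h2
        intro x hx hxX
        intro s hs
        exact (Set.mem_sInter.1 hx _ (Set.mem_image_of_mem _ hs)) hxX
      haveI := hfin.fintype
      let e : Fin (Fintype.card ↥𝒜) ≃ ↥𝒜 := (Fintype.equivFin ↥𝒜).symm
      refine ⟨Fintype.card ↥𝒜, fun m => V (e m), fun m => by rw [hV]; exact hGk _, ?_⟩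
      apply le_antisymm
      · intro A hA
        rw [Filter.mem_iSup] at hA
        have hA' : ∀ X : ↥𝒜, {x | x ∈ (X : Set I) → x ∈ A} ∈ F := by
          intro X
          have h1 := hA (e.symm X)
          rw [hV, e.apply_symm_apply] at h1
          exact Filter.mem_inf_principal.1 h1
        have hB : (⋂ X ∈ hfin.toFinset, {x | x ∈ X → x ∈ A}) ∈ F := by
          apply (Filter.biInter_finset_mem _).2
          intro X hX
          exact hA' ⟨X, hfin.mem_toFinset.1 hX⟩
        apply F.mem_of_superset (Filter.inter_mem hB hUnion)
        rintro x ⟨hx1, hx2⟩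
        obtain ⟨X, hX𝒜, hxX⟩ := Set.mem_sUnion.1 hx2
        exact (Set.mem_iInter₂.1 hx1 X (hfin.mem_toFinset.2 hX𝒜)) hxX
      · apply iSup_le
        intro m
        rw [hV]
        exact inf_le_left
  · rintro ⟨n, U, hU, rfl⟩ S J hS hdisj hcover
    have key : ∀ m : Fin n, ∃ s, J s ∈ (U m : Filter I) := by
      intro m
      by_contra h
      push_neg at h
      have h' : ∀ s, (J s)ᶜ ∈ (U m : Filter I) :=
        fun s => (Ultrafilter.compl_mem_iff_notMem).2 (h s)
      have hempty : ⋂₀ (Set.range fun s => (J s)ᶜ) ∈ (U m : Filter I) := by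
        apply hU m
        · exact lt_of_le_of_lt Cardinal.mk_range_le hS
        · rintro _ ⟨s, rfl⟩; exact h' s
      rw [Set.sInter_range] at hempty
      have : (⋂ s, (J s)ᶜ) = (∅ : Set I) := by
        rw [← Set.compl_iUnion, hcover, Set.compl_univ]
      rw [this] at hempty
      exact (U m).neBot'.ne (Filter.empty_mem_iff_bot.1 hempty)
    choose sel hsel using key
    refine ⟨Finset.image sel Finset.univ, ?_⟩
    rw [Filter.mem_iSup]
    intro m
    apply Filter.mem_of_superset (hsel m)
    apply Set.subset_biUnion_of_mem
    exact Finset.mem_image.2 ⟨m, Finset.mem_univ m, rfl⟩
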